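/- Let H be a Hopf algebra over a commutative ring k and A a unital associative k-algebra with a left H-module algebra action ▷. Then the group of unital algebra homomorphisms H → Z(A) under convolution acts freely and transitively from the right on the set of momentum maps for ▷; that is, for any two momentum maps J and J' for ▷ there exists a unique unital algebra homomorphism 𝗓 : H → Z(A) such that J' = J * 𝗓 (i.e. J'(g) = J(g₁)𝗓(g₂) for all g ∈ H). -/

import Mathlib

open scoped TensorProduct

noncomputable section

namespace EquivariantMorita

/-- The Sweedler-type map `h ↦ μ (f h₍₁₎) (g h₍₂₎)` (with implicit summation over the
Sweedler decomposition `Δ h = h₍₁₎ ⊗ h₍₂₎` of the comultiplication). -/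
def sw (k : Type*) {H M N P : Type*} [CommRing k]
    [AddCommGroup H] [Module k H] [Coalgebra k H]
    [AddCommGroup M] [Module k M] [AddCommGroup N] [Module k N]
    [AddCommGroup P] [Module k P]
    (μ : M →ₗ[k] N →ₗ[k] P) (f : H →ₗ[k] M) (g : H →ₗ[k] N) : H →ₗ[k] P :=
  TensorProduct.lift μ ∘ₗ TensorProduct.map f g ∘ₗ (Coalgebra.comul : H →ₗ[k] H ⊗[k] H)

/-- The convolution-type map `h ↦ f (h₍₁₎) * g (h₍₂₎)`. -/
def swMul (k : Type*) {H A : Type*} [CommRing k]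
    [AddCommGroup H] [Module k H] [Coalgebra k H] [Ring A] [Algebra k A]
    (f g : H →ₗ[k] A) : H →ₗ[k] A :=
  sw k (LinearMap.mul k A) f g

section ModuleAlgebra

variable (k : Type*) [CommRing k] {H : Type*} [Ring H] [HopfAlgebra k H]
variable {A : Type*} [Ring A] [Algebra k A]

/-- `act : H × A → A` (given as a `k`-bilinear map) makes `A` a left `H`-module algebra:
`(gh) ▷ a = g ▷ (h ▷ a)`, `1 ▷ a = a`, `h ▷ (ab) = (h₍₁₎ ▷ a)(h₍₂₎ ▷ b)` and
`h ▷ 1 = ε(h) 1`. -/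
structure IsModuleAlgebraAction (act : H →ₗ[k] A →ₗ[k] A) : Prop where
  mul_act : ∀ (g h : H) (a : A), act (g * h) a = act g (act h a)
  one_act : ∀ a : A, act 1 a = a
  act_mul : ∀ (h : H) (a b : A), act h (a * b) = swMul k (act.flip a) (act.flip b) h
  act_one : ∀ h : H, act h 1 = Coalgebra.counit (R := k) h • (1 : A)

/-- Membership in `Gl(H,A)`: (i) `𝖺(1) = 1`, (ii) `𝖺(gh) = 𝖺(g₍₁₎)(g₍₂₎ ▷ 𝖺(h))`,
(iii) `(h₍₁₎ ▷ b) 𝖺(h₍₂₎) = 𝖺(h₍₁₎)(h₍₂₎ ▷ b)`. -/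
structure MemGl (act : H →ₗ[k] A →ₗ[k] A) (a : H →ₗ[k] A) : Prop where
  map_one' : a 1 = 1
  map_mul' : ∀ g h : H, a (g * h) = swMul k a (act.flip (a h)) g
  comm' : ∀ (h : H) (b : A), swMul k (act.flip b) a h = swMul k a (act.flip b) h

/-- `J` is a momentum map for the action `act`: it is a unital algebra homomorphism
`H → A` with `h ▷ a = J(h₍₁₎) a J(S(h₍₂₎))`. -/
structure IsMomentumMap (act : H →ₗ[k] A →ₗ[k] A) (J : H →ₗ[k] A) : Prop where
  map_one' : J 1 = 1
  map_mul' : ∀ g h : H, J (g * h) = J g * J h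
  inner' : ∀ (h : H) (a : A),
    act h a = swMul k J (LinearMap.mul k A a ∘ₗ (J ∘ₗ HopfAlgebra.antipode (R := k))) h

end ModuleAlgebra

end EquivariantMorita

namespace EquivariantMorita

open Coalgebra

section Lemmas
variable {k : Type*} [CommRing k] {H : Type*} [Ring H] [HopfAlgebra k H]
variable {A : Type*} [Ring A] [Algebra k A]

lemma swMul_eq_sum {ι : Type*} {s : Finset ι} {a b : ι → H} {x : H}
    (hx : (Coalgebra.comul (R := k) x : H ⊗[k] H) = ∑ p ∈ s, a p ⊗ₜ[k] b p)
    (f g : H →ₗ[k] A) :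
    swMul k f g x = ∑ p ∈ s, f (a p) * g (b p) := by
  simp [swMul, sw, hx, map_sum]

lemma swMul_repr {ι : Type*} {x : H} (r : Coalgebra.Repr k x ι) (f g : H →ₗ[k] A) :
    swMul k f g x = ∑ i ∈ r.index, f (r.left i) * g (r.right i) :=
  swMul_eq_sum r.eq.symm f g

/-- convolution unit -/
def cunit (k : Type*) (H : Type*) (A : Type*) [CommRing k] [Ring H] [HopfAlgebra k H]
    [Ring A] [Algebra k A] : H →ₗ[k] A :=
  (Coalgebra.counit : H →ₗ[k] k).smulRight (1 : A)

lemma swMul_assoc (f g w : H →ₗ[k] A) :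
    swMul k (swMul k f g) w = swMul k f (swMul k g w) := by
  ext x
  set r := Coalgebra.Repr.arbitrary k x with hr
  set a₁ : (i : r.ι) → Coalgebra.Repr k (r.left i) (H × H) :=
    fun i => Coalgebra.Repr.arbitrary k (r.left i) with ha₁
  set a₂ : (i : r.ι) → Coalgebra.Repr k (r.right i) (H × H) :=
    fun i => Coalgebra.Repr.arbitrary k (r.right i) with ha₂
  have key := Coalgebra.sum_tmul_tmul_eq (R := k) r a₁ a₂
  let Ψ : H ⊗[k] (H ⊗[k] H) →ₗ[k] A :=
    TensorProduct.lift (LinearMap.mul k A) ∘ₗ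
      TensorProduct.map f (TensorProduct.lift (LinearMap.mul k A) ∘ₗ TensorProduct.map g w)
  have hΨ : ∀ (x y z : H), Ψ (x ⊗ₜ[k] (y ⊗ₜ[k] z)) = f x * (g y * w z) := by
    intro x y z; simp [Ψ]
  have key2 := congrArg Ψ key
  simp only [map_sum, hΨ] at key2
  calc swMul k (swMul k f g) w x
      = ∑ i ∈ r.index, swMul k f g (r.left i) * w (r.right i) := swMul_repr r _ _
    _ = ∑ i ∈ r.index, ∑ j ∈ (a₁ i).index,
          f ((a₁ i).left j) * (g ((a₁ i).right j) * w (r.right i)) := by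
        refine Finset.sum_congr rfl fun i _ => ?_
        rw [swMul_repr (a₁ i), Finset.sum_mul]
        exact Finset.sum_congr rfl fun j _ => by rw [mul_assoc]
    _ = ∑ i ∈ r.index, ∑ j ∈ (a₂ i).index,
          f (r.left i) * (g ((a₂ i).left j) * w ((a₂ i).right j)) := key2
    _ = ∑ i ∈ r.index, f (r.left i) * swMul k g w (r.right i) := by
        refine Finset.sum_congr rfl fun i _ => ?_
        rw [swMul_repr (a₂ i), Finset.mul_sum]
    _ = swMul k f (swMul k g w) x := (swMul_repr r _ _).symm

lemma swMul_cunit_left (f : H →ₗ[k] A) (b : A) :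
    swMul k ((Coalgebra.counit : H →ₗ[k] k).smulRight b) f = LinearMap.mulLeft k b ∘ₗ f := by
  ext x
  rw [swMul_repr (Coalgebra.Repr.arbitrary k x)]
  have := congrArg (TensorProduct.lid k A)
    (Coalgebra.sum_counit_tmul_map_eq (R := k) f x (repr := Coalgebra.Repr.arbitrary k x))
  simp only [map_sum, TensorProduct.lid_tmul, one_smul] at this
  calc ∑ i ∈ (Coalgebra.Repr.arbitrary k x).index,
        ((Coalgebra.counit : H →ₗ[k] k).smulRight b) ((Coalgebra.Repr.arbitrary k x).left i)
          * f ((Coalgebra.Repr.arbitrary k x).right i)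
      = b * ∑ i ∈ (Coalgebra.Repr.arbitrary k x).index,
          Coalgebra.counit (R := k) ((Coalgebra.Repr.arbitrary k x).left i)
            • f ((Coalgebra.Repr.arbitrary k x).right i) := by
        rw [Finset.mul_sum]
        exact Finset.sum_congr rfl fun i _ => by
          simp [LinearMap.smulRight_apply, smul_mul_assoc, mul_smul_comm]
    _ = b * f x := by rw [this]
    _ = _ := rfl

lemma swMul_cunit_right (f : H →ₗ[k] A) (b : A) :
    swMul k f ((Coalgebra.counit : H →ₗ[k] k).smulRight b) = LinearMap.mulRight k b ∘ₗ f := by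
  ext x
  rw [swMul_repr (Coalgebra.Repr.arbitrary k x)]
  have := congrArg (TensorProduct.rid k A)
    (Coalgebra.sum_map_tmul_counit_eq (R := k) f x (repr := Coalgebra.Repr.arbitrary k x))
  simp only [map_sum, TensorProduct.rid_tmul, one_smul] at this
  calc ∑ i ∈ (Coalgebra.Repr.arbitrary k x).index,
        f ((Coalgebra.Repr.arbitrary k x).left i) *
          ((Coalgebra.counit : H →ₗ[k] k).smulRight b) ((Coalgebra.Repr.arbitrary k x).right i)
      = (∑ i ∈ (Coalgebra.Repr.arbitrary k x).index,
          Coalgebra.counit (R := k) ((Coalgebra.Repr.arbitrary k x).right i)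
            • f ((Coalgebra.Repr.arbitrary k x).left i)) * b := by
        rw [Finset.sum_mul]
        exact Finset.sum_congr rfl fun i _ => by
          simp [LinearMap.smulRight_apply, smul_mul_assoc, mul_smul_comm]
    _ = f x * b := by rw [this]
    _ = _ := rfl

lemma swMul_cunit_one_left (f : H →ₗ[k] A) : swMul k (cunit k H A) f = f := by
  rw [cunit, swMul_cunit_left, LinearMap.mulLeft_one, LinearMap.id_comp]

lemma swMul_cunit_one_right (f : H →ₗ[k] A) : swMul k f (cunit k H A) = f := by
  rw [cunit, swMul_cunit_right, LinearMap.mulRight_one, LinearMap.id_comp]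

lemma swMul_mulLeft_comp (a : A) (f g : H →ₗ[k] A) :
    swMul k (LinearMap.mulLeft k a ∘ₗ f) g = LinearMap.mulLeft k a ∘ₗ swMul k f g := by
  ext x
  rw [LinearMap.comp_apply, swMul_repr (Coalgebra.Repr.arbitrary k x),
    swMul_repr (Coalgebra.Repr.arbitrary k x), LinearMap.mulLeft_apply, Finset.mul_sum]
  exact Finset.sum_congr rfl fun i _ => by rw [LinearMap.comp_apply]; simp [mul_assoc]

lemma swMul_mulRight_comp (a : A) (f g : H →ₗ[k] A) :
    swMul k f (LinearMap.mulRight k a ∘ₗ g) = LinearMap.mulRight k a ∘ₗ swMul k f g := by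
  ext x
  rw [LinearMap.comp_apply, swMul_repr (Coalgebra.Repr.arbitrary k x),
    swMul_repr (Coalgebra.Repr.arbitrary k x), LinearMap.mulRight_apply, Finset.sum_mul]
  exact Finset.sum_congr rfl fun i _ => by rw [LinearMap.comp_apply]; simp [mul_assoc]

lemma antipode_conv_left (f : H →ₗ[k] A) (h1 : f 1 = 1)
    (hm : ∀ g h : H, f (g * h) = f g * f h) :
    swMul k (f ∘ₗ HopfAlgebra.antipode (R := k)) f = cunit k H A := by
  ext x
  rw [swMul_repr (Coalgebra.Repr.arbitrary k x)]
  have : ∑ i ∈ (Coalgebra.Repr.arbitrary k x).index,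
      (f ∘ₗ HopfAlgebra.antipode (R := k)) ((Coalgebra.Repr.arbitrary k x).left i)
        * f ((Coalgebra.Repr.arbitrary k x).right i)
      = f (∑ i ∈ (Coalgebra.Repr.arbitrary k x).index,
          HopfAlgebra.antipode (R := k) ((Coalgebra.Repr.arbitrary k x).left i)
            * (Coalgebra.Repr.arbitrary k x).right i) := by
    rw [map_sum]
    exact Finset.sum_congr rfl fun i _ => (hm _ _).symm
  rw [this, HopfAlgebra.sum_antipode_mul_eq_smul, map_smul, h1]
  rfl

lemma antipode_conv_right (f : H →ₗ[k] A) (h1 : f 1 = 1)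
    (hm : ∀ g h : H, f (g * h) = f g * f h) :
    swMul k f (f ∘ₗ HopfAlgebra.antipode (R := k)) = cunit k H A := by
  ext x
  rw [swMul_repr (Coalgebra.Repr.arbitrary k x)]
  have : ∑ i ∈ (Coalgebra.Repr.arbitrary k x).index,
      f ((Coalgebra.Repr.arbitrary k x).left i) *
        (f ∘ₗ HopfAlgebra.antipode (R := k)) ((Coalgebra.Repr.arbitrary k x).right i)
      = f (∑ i ∈ (Coalgebra.Repr.arbitrary k x).index,
          (Coalgebra.Repr.arbitrary k x).left i *
            HopfAlgebra.antipode (R := k) ((Coalgebra.Repr.arbitrary k x).right i)) := by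
    rw [map_sum]
    exact Finset.sum_congr rfl fun i _ => (hm _ _).symm
  rw [this, HopfAlgebra.sum_mul_antipode_eq_smul, map_smul, h1]
  rfl

lemma cancel_left (J θ₁ θ₂ : H →ₗ[k] A) (h1 : J 1 = 1)
    (hm : ∀ g h : H, J (g * h) = J g * J h)
    (heq : swMul k J θ₁ = swMul k J θ₂) : θ₁ = θ₂ := by
  have hL := antipode_conv_left J h1 hm
  calc θ₁ = swMul k (cunit k H A) θ₁ := (swMul_cunit_one_left θ₁).symm
    _ = swMul k (J ∘ₗ HopfAlgebra.antipode (R := k)) (swMul k J θ₁) := by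
        rw [← hL, swMul_assoc]
    _ = swMul k (J ∘ₗ HopfAlgebra.antipode (R := k)) (swMul k J θ₂) := by rw [heq]
    _ = swMul k (cunit k H A) θ₂ := by rw [← swMul_assoc, hL]
    _ = θ₂ := swMul_cunit_one_left θ₂

lemma antipode_one' : HopfAlgebra.antipode (R := k) (1 : H) = 1 := by
  let r : Coalgebra.Repr k (1:H) Unit :=
    ⟨(Finset.univ : Finset Unit), fun _ => 1, fun _ => 1, by
      simp [Algebra.TensorProduct.one_def]⟩
  have := HopfAlgebra.sum_mul_antipode_eq_smul (R := k) r
  simpa [r] using this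

lemma swMul_apply_one (f g : H →ₗ[k] A) : swMul k f g 1 = f 1 * g 1 := by
  simp [swMul, sw, Algebra.TensorProduct.one_def]

end Lemmas

section Lemmas2
open Coalgebra
variable {k : Type*} [CommRing k] {H : Type*} [Ring H] [HopfAlgebra k H]
variable {A : Type*} [Ring A] [Algebra k A]

lemma comul_mul_repr {ι κ : Type*} (g h : H) (rg : Coalgebra.Repr k g ι) (rh : Coalgebra.Repr k h κ) :
    (Coalgebra.comul (R := k) (g * h) : H ⊗[k] H)
      = ∑ p ∈ rg.index ×ˢ rh.index,
          (rg.left p.1 * rh.left p.2) ⊗ₜ[k] (rg.right p.1 * rh.right p.2) := by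
  rw [Bialgebra.comul_mul, ← rg.eq, ← rh.eq, Finset.sum_mul_sum, Finset.sum_product]
  exact Finset.sum_congr rfl fun i _ => Finset.sum_congr rfl fun j _ => by
    rw [Algebra.TensorProduct.tmul_mul_tmul]

lemma mul_swap_assoc (p q r s : A) (hq : ∀ t : A, t * q = q * t) :
    p * q * (r * s) = p * (r * (q * s)) := by
  rw [mul_assoc, ← mul_assoc q r s, ← hq r, mul_assoc]

end Lemmas2

/-- The group of unital algebra homomorphisms `H → Z(A)` acts freely and
transitively (from the right, by convolution) on the set of momentum maps of a given
`H`-module algebra action on `A`: for any two momentum maps `J, J'` there is a unique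
unital algebra homomorphism `𝗓 : H → Z(A)` with `J' = J * 𝗓`. -/
theorem existsUnique_central_twist_of_momentumMaps
    (k : Type*) [CommRing k]
    {H : Type*} [Ring H] [HopfAlgebra k H]
    {A : Type*} [Ring A] [Algebra k A]
    (act : H →ₗ[k] A →ₗ[k] A) (hact : IsModuleAlgebraAction k act)
    (J J' : H →ₗ[k] A) (hJ : IsMomentumMap k act J) (hJ' : IsMomentumMap k act J') :
    ∃! z : H →ₗ[k] A,
      ((∀ (g : H) (b : A), z g * b = b * z g) ∧ z 1 = 1
          ∧ ∀ g h : H, z (g * h) = z g * z h)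
        ∧ ∀ g : H, J' g = swMul k J z g := by
  classical
  set z : H →ₗ[k] A := swMul k (J ∘ₗ HopfAlgebra.antipode (R := k)) J' with hzdef
  have hR : swMul k J (J ∘ₗ HopfAlgebra.antipode (R := k)) = cunit k H A :=
    antipode_conv_right J hJ.map_one' hJ.map_mul'
  have hL : swMul k (J ∘ₗ HopfAlgebra.antipode (R := k)) J = cunit k H A :=
    antipode_conv_left J hJ.map_one' hJ.map_mul'
  have hL' : swMul k (J' ∘ₗ HopfAlgebra.antipode (R := k)) J' = cunit k H A :=
    antipode_conv_left J' hJ'.map_one' hJ'.map_mul'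
  have hJz : swMul k J z = J' := by
    rw [hzdef, ← swMul_assoc, hR, swMul_cunit_one_left]
  have hmulconv : ∀ a : A, LinearMap.mul k A a = LinearMap.mulLeft k a := by
    intro a; ext b; simp
  have key : ∀ a : A,
      swMul k J (LinearMap.mulLeft k a ∘ₗ (J ∘ₗ HopfAlgebra.antipode (R := k)))
        = swMul k J' (LinearMap.mulLeft k a ∘ₗ (J' ∘ₗ HopfAlgebra.antipode (R := k))) := by
    intro a; ext h
    have h1 := hJ.inner' h a
    have h2 := hJ'.inner' h a
    rw [hmulconv a] at h1 h2
    exact h1.symm.trans h2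
  have hstep : ∀ a : A,
      swMul k J (LinearMap.mulLeft k a ∘ₗ z) = LinearMap.mulRight k a ∘ₗ J' := by
    intro a
    have e2 : swMul k (swMul k J
          (LinearMap.mulLeft k a ∘ₗ (J ∘ₗ HopfAlgebra.antipode (R := k)))) J'
        = swMul k J (LinearMap.mulLeft k a ∘ₗ z) := by
      rw [swMul_assoc, swMul_mulLeft_comp, ← hzdef]
    have hca : LinearMap.mulLeft k a ∘ₗ cunit k H A
        = (Coalgebra.counit : H →ₗ[k] k).smulRight a := by
      ext x; simp [cunit, mul_smul_comm]
    have e1 : swMul k (swMul k J'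
          (LinearMap.mulLeft k a ∘ₗ (J' ∘ₗ HopfAlgebra.antipode (R := k)))) J'
        = LinearMap.mulRight k a ∘ₗ J' := by
      rw [swMul_assoc, swMul_mulLeft_comp, hL', hca, swMul_cunit_right]
    rw [← e2, key a, e1]
  have central : ∀ (x : H) (a : A), a * z x = z x * a := by
    intro x a
    have h3 : LinearMap.mulLeft k a ∘ₗ z = LinearMap.mulRight k a ∘ₗ z := by
      calc LinearMap.mulLeft k a ∘ₗ z
          = swMul k (cunit k H A) (LinearMap.mulLeft k a ∘ₗ z) :=
            (swMul_cunit_one_left _).symm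
        _ = swMul k (J ∘ₗ HopfAlgebra.antipode (R := k))
              (swMul k J (LinearMap.mulLeft k a ∘ₗ z)) := by rw [← hL, swMul_assoc]
        _ = swMul k (J ∘ₗ HopfAlgebra.antipode (R := k))
              (LinearMap.mulRight k a ∘ₗ J') := by rw [hstep a]
        _ = LinearMap.mulRight k a ∘ₗ
              swMul k (J ∘ₗ HopfAlgebra.antipode (R := k)) J' :=
            swMul_mulRight_comp a _ J'
        _ = LinearMap.mulRight k a ∘ₗ z := by rw [← hzdef]
    simpa using LinearMap.congr_fun h3 x
  have hrepr : ∀ (u : H) (r : Coalgebra.Repr k u (H × H)),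
      J' u = ∑ i ∈ r.index, J (r.left i) * z (r.right i) := by
    intro u r; rw [← hJz]; exact swMul_repr r J z
  have step1 : ∀ h x : H,
      swMul k J (LinearMap.mulLeft k (z x) ∘ₗ z) h
        = swMul k J (z ∘ₗ LinearMap.mulLeft k x) h := by
    intro h x
    set rh := Coalgebra.Repr.arbitrary k h with hrh
    set θ₁ : H →ₗ[k] A := ∑ j ∈ rh.index,
      LinearMap.mulLeft k (J (rh.left j)) ∘ₗ
        (LinearMap.mulRight k (z (rh.right j)) ∘ₗ z) with hθ₁
    set θ₂ : H →ₗ[k] A := ∑ j ∈ rh.index,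
      LinearMap.mulLeft k (J (rh.left j)) ∘ₗ
        (z ∘ₗ LinearMap.mulRight k (rh.right j)) with hθ₂
    have hθ₁app : ∀ u : H,
        θ₁ u = ∑ j ∈ rh.index, J (rh.left j) * (z u * z (rh.right j)) := by
      intro u; rw [hθ₁]; simp
    have hθ₂app : ∀ u : H,
        θ₂ u = ∑ j ∈ rh.index, J (rh.left j) * z (u * rh.right j) := by
      intro u; rw [hθ₂]; simp
    have claim : swMul k J θ₁ = swMul k J θ₂ := by
      ext g
      set rg := Coalgebra.Repr.arbitrary k g with hrg
      have lhs : swMul k J θ₁ g = J' g * J' h := by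
        rw [swMul_repr rg, hrepr g rg, hrepr h rh, Finset.sum_mul_sum]
        refine Finset.sum_congr rfl fun i _ => ?_
        rw [hθ₁app, Finset.mul_sum]
        exact Finset.sum_congr rfl fun j _ =>
          (mul_swap_assoc _ _ _ _ fun t => central (rg.right i) t).symm
      have rhs : swMul k J θ₂ g = J' g * J' h := by
        rw [swMul_repr rg]
        have e : ∑ i ∈ rg.index, J (rg.left i) * θ₂ (rg.right i)
            = swMul k J z (g * h) := by
          rw [swMul_eq_sum (comul_mul_repr g h rg rh) J z, Finset.sum_product]
          refine Finset.sum_congr rfl fun i _ => ?_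
          rw [hθ₂app, Finset.mul_sum]
          exact Finset.sum_congr rfl fun j _ => by rw [hJ.map_mul', mul_assoc]
        rw [e, LinearMap.congr_fun hJz (g * h)]
        exact hJ'.map_mul' g h
      rw [lhs, rhs]
    have θeq := cancel_left J θ₁ θ₂ hJ.map_one' hJ.map_mul' claim
    have l1 : swMul k J (LinearMap.mulLeft k (z x) ∘ₗ z) h = θ₁ x := by
      rw [swMul_repr rh, hθ₁app]
      exact Finset.sum_congr rfl fun j _ => by simp
    have l2 : swMul k J (z ∘ₗ LinearMap.mulLeft k x) h = θ₂ x := by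
      rw [swMul_repr rh, hθ₂app]
      exact Finset.sum_congr rfl fun j _ => by simp
    rw [l1, l2, θeq]
  have hzmul : ∀ x y : H, z (x * y) = z x * z y := by
    intro x y
    have heq := cancel_left J (LinearMap.mulLeft k (z x) ∘ₗ z)
      (z ∘ₗ LinearMap.mulLeft k x) hJ.map_one' hJ.map_mul'
      (by ext h; exact step1 h x)
    simpa using (LinearMap.congr_fun heq y).symm
  have hz1 : z 1 = 1 := by
    rw [hzdef, swMul_apply_one]
    simp [antipode_one', hJ.map_one', hJ'.map_one']
  refine ⟨z, ⟨⟨fun g b => (central g b).symm, hz1, hzmul⟩,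
    fun g => (LinearMap.congr_fun hJz g).symm⟩, ?_⟩
  rintro z' ⟨-, h4⟩
  refine cancel_left J z' z hJ.map_one' hJ.map_mul' ?_
  ext g
  exact (h4 g).symm.trans (LinearMap.congr_fun hJz g).symm


end EquivariantMorita
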